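/- Let k be a field of characteristic p > 0 and A a commutative k-algebra. Let A[F] denote the noncommutative ring ⊕_{n≥0} A·Fⁿ with multiplication determined by F·a = a^p·F for a ∈ A. Then the additive group A[F]/(F−1)A[F] is isomorphic to the additive group of the perfection A^{p^{−∞}} = colim(A → A → ⋯) along the Frobenius maps a ↦ a^p. -/

import Mathlib

open PerfectClosure

section Aux

variable (p : ℕ) [Fact p.Prime] (A : Type*) [CommRing A] [CharP A p]

private noncomputable def myS : AddSubgroup (ℕ →₀ A) :=
  AddSubgroup.closure
    (Set.range fun na : ℕ × A =>
      Finsupp.single (na.1 + 1) (na.2 ^ p) - Finsupp.single na.1 na.2)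

private lemma mk_iterate (n m : ℕ) (a : A) :
    PerfectClosure.mk A p (n + m, (frobenius A p)^[m] a) = PerfectClosure.mk A p (n, a) := by
  induction m with
  | zero => simp
  | succ m ih =>
      rw [Function.iterate_succ_apply', frobenius_def, ← Nat.add_assoc, mk_succ_pow, ih]

private noncomputable def stageHom (n : ℕ) : A →+ PerfectClosure A p where
  toFun a := PerfectClosure.mk A p (n, a)
  map_zero' := PerfectClosure.mk_zero_right A p n
  map_add' a b := by
    show PerfectClosure.mk A p (n, a + b) = _
    rw [mk_add_mk, ← iterate_map_add (frobenius A p)]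
    exact (mk_iterate p A n n (a + b)).symm

private noncomputable def myF : (ℕ →₀ A) →+ PerfectClosure A p :=
  Finsupp.liftAddHom (stageHom p A)

private lemma myF_single (n : ℕ) (a : A) :
    myF p A (Finsupp.single n a) = PerfectClosure.mk A p (n, a) :=
  Finsupp.liftAddHom_apply_single _ _ _

private lemma myF_ker : myS p A ≤ (myF p A).ker := by
  rw [myS, AddSubgroup.closure_le]
  rintro _ ⟨⟨n, a⟩, rfl⟩
  simp only [SetLike.mem_coe, AddMonoidHom.mem_ker, map_sub, myF_single]
  rw [mk_succ_pow, sub_self]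

private noncomputable def myPhi : ((ℕ →₀ A) ⧸ myS p A) →+ PerfectClosure A p :=
  QuotientAddGroup.lift _ (myF p A) (myF_ker p A)

private lemma gen_mem (n : ℕ) (a : A) :
    Finsupp.single (n + 1) (a ^ p) - Finsupp.single n a ∈ myS p A :=
  AddSubgroup.subset_closure ⟨(n, a), rfl⟩

private lemma quot_iterate (n m : ℕ) (a : A) :
    (QuotientAddGroup.mk (Finsupp.single (n + m) ((frobenius A p)^[m] a)) :
      (ℕ →₀ A) ⧸ myS p A) = QuotientAddGroup.mk (Finsupp.single n a) := by
  induction m with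
  | zero => simp
  | succ m ih =>
      rw [← ih, Function.iterate_succ_apply', frobenius_def, ← Nat.add_assoc]
      rw [QuotientAddGroup.eq]
      have := neg_mem (gen_mem p A (n + m) ((frobenius A p)^[m] a))
      rw [neg_sub] at this
      simpa [neg_add_eq_sub] using this

private noncomputable def myPsi : PerfectClosure A p →+ ((ℕ →₀ A) ⧸ myS p A) where
  toFun := Quot.lift
    (fun x : ℕ × A => (QuotientAddGroup.mk (Finsupp.single x.1 x.2) : (ℕ →₀ A) ⧸ myS p A))
    (by
      rintro _ _ ⟨n, x⟩
      rw [QuotientAddGroup.eq, frobenius_def]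
      simpa [neg_add_eq_sub] using gen_mem p A n x)
  map_zero' := by
    rw [PerfectClosure.zero_def, PerfectClosure.mk]
    simp
  map_add' x y := by
    induction x using PerfectClosure.induction_on with | h x =>
    induction y using PerfectClosure.induction_on with | h y =>
    obtain ⟨n, a⟩ := x
    obtain ⟨m, b⟩ := y
    rw [mk_add_mk]
    show (QuotientAddGroup.mk (Finsupp.single (n + m) _) : (ℕ →₀ A) ⧸ myS p A) = _
    rw [Finsupp.single_add, QuotientAddGroup.mk_add, quot_iterate,
      show n + m = m + n from Nat.add_comm n m, quot_iterate]
    rfl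

private lemma myPsi_mk (x : ℕ × A) :
    myPsi p A (PerfectClosure.mk A p x) = QuotientAddGroup.mk (Finsupp.single x.1 x.2) := rfl

private lemma left_inv : ∀ x, myPsi p A (myPhi p A x) = x := by
  intro x
  induction x using QuotientAddGroup.induction_on with | H f =>
  induction f using Finsupp.induction with
  | zero => simp
  | single_add n a f _ _ ih =>
      rw [QuotientAddGroup.mk_add, map_add, map_add, ih]
      congr 1
      rw [myPhi, QuotientAddGroup.lift_mk, myF_single, myPsi_mk]

private lemma right_inv : ∀ x, myPhi p A (myPsi p A x) = x := by
  intro x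
  induction x using PerfectClosure.induction_on with | h x =>
  rw [myPsi_mk, myPhi, QuotientAddGroup.lift_mk, myF_single]

private noncomputable def myE : ((ℕ →₀ A) ⧸ myS p A) ≃+ PerfectClosure A p where
  toFun := myPhi p A
  invFun := myPsi p A
  left_inv := left_inv p A
  right_inv := right_inv p A
  map_add' := map_add _

private lemma myE_single (n : ℕ) (a : A) :
    myE p A (QuotientAddGroup.mk (Finsupp.single n a)) = PerfectClosure.mk A p (n, a) := by
  have : myE p A (QuotientAddGroup.mk (Finsupp.single n a)) =
      myPhi p A (QuotientAddGroup.mk (Finsupp.single n a)) := rfl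
  rw [this, myPhi, QuotientAddGroup.lift_mk, myF_single]

end Aux

theorem stmt_9 (p : ℕ) [Fact p.Prime] (k : Type*) [Field k] [CharP k p]
    (A : Type*) [CommRing A] [Algebra k A] [CharP A p] :
    letI S : AddSubgroup (ℕ →₀ A) :=
      AddSubgroup.closure
        (Set.range fun na : ℕ × A =>
          Finsupp.single (na.1 + 1) (na.2 ^ p) - Finsupp.single na.1 na.2)
    ∃ e : ((ℕ →₀ A) ⧸ S) ≃+ PerfectClosure A p,
      ∀ (n : ℕ) (a : A),
        e (QuotientAddGroup.mk (Finsupp.single n a)) = PerfectClosure.mk A p (n, a) := by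
  exact ⟨myE p A, myE_single p A⟩
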